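/- arXiv:2306.16573 — 3 statements merged into one kernel-verified Lean document; each statement's English description precedes it below -/
import Mathlib

section
/- Let f* be an arbitrary probability density on ℝ (symmetry not required) and let f̂_r be the kernel density estimate of f_r from N i.i.d. samples Y_1, …, Y_N ∼ f*. For any fixed x ∈ ℝ, if N ≥ 3·log(2/δ)/(f_r(x)·r), then with probability at least 1 − δ over the samples, |f̂_r(x) − f_r(x)| ≤ √(3·f_r(x)·log(2/δ)/(N·r)). -/
open MeasureTheory Real Filter

/-- Density of the Gaussian `N(0, r²)`. -/
noncomputable def gaussDensity (r x : ℝ) : ℝ :=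
  (Real.sqrt (2 * Real.pi * r ^ 2))⁻¹ * Real.exp (-x ^ 2 / (2 * r ^ 2))

/-- The `r`-smoothed density `f_r(x) = ∫ f(y) w_r(x − y) dy`. -/
noncomputable def smoothed (f : ℝ → ℝ) (r x : ℝ) : ℝ :=
  ∫ y, f y * gaussDensity r (x - y)

/-- The score function `s_r(x) = f_r'(x) / f_r(x)` of the smoothed density. -/
noncomputable def score (f : ℝ → ℝ) (r x : ℝ) : ℝ :=
  deriv (smoothed f r) x / smoothed f r x

/-- The `r`-smoothed Fisher information `I_r = E_{x∼f_r}[s_r(x)²]`. -/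
noncomputable def fisherInfo (f : ℝ → ℝ) (r : ℝ) : ℝ :=
  ∫ x, smoothed f r x * score f r x ^ 2

/-- The measure on ℝ with density `f` with respect to Lebesgue measure. -/
noncomputable def densMeasure (f : ℝ → ℝ) : Measure ℝ :=
  MeasureTheory.volume.withDensity fun x => ENNReal.ofReal (f x)

/-- `f` is a probability density on ℝ. -/
def IsDensity (f : ℝ → ℝ) : Prop :=
  (∀ x, 0 ≤ f x) ∧ MeasureTheory.Integrable f ∧ (∫ x, f x) = 1

/-- The density `f` has mean `μ`. -/
def HasMean (f : ℝ → ℝ) (μ : ℝ) : Prop :=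
  MeasureTheory.Integrable (fun x => x * f x) ∧ (∫ x, x * f x) = μ

/-- The density `f` (with mean `μ`) has variance `σ2`. -/
def HasVar (f : ℝ → ℝ) (μ σ2 : ℝ) : Prop :=
  MeasureTheory.Integrable (fun x => (x - μ) ^ 2 * f x) ∧ (∫ x, (x - μ) ^ 2 * f x) = σ2

/-- Kernel density estimate from `N` samples `Y`. -/
noncomputable def kde (r : ℝ) (N : ℕ) (Y : Fin N → ℝ) (x : ℝ) : ℝ :=
  (N : ℝ)⁻¹ * ∑ i, gaussDensity r (x - Y i)

/-- Score of the kernel density estimate. -/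
noncomputable def kdeScore (r : ℝ) (N : ℕ) (Y : Fin N → ℝ) (x : ℝ) : ℝ :=
  deriv (kde r N Y) x / kde r N Y x

/-- The clipping threshold `(2/r)·√(log(N / log(1/δ)))`. -/
noncomputable def clipThreshold (r : ℝ) (N : ℕ) (δ : ℝ) : ℝ :=
  (2 / r) * Real.sqrt (Real.log ((N : ℝ) / Real.log (1 / δ)))

/-- The clipped KDE score. -/
noncomputable def clippedScore (r : ℝ) (N : ℕ) (δ : ℝ) (Y : Fin N → ℝ) (x : ℝ) : ℝ :=
  Real.sign (kdeScore r N Y x) * min |kdeScore r N Y x| (clipThreshold r N δ)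

/-- The clipped KDE score symmetrized around the point `c`. -/
noncomputable def symScore (r : ℝ) (N : ℕ) (δ : ℝ) (Y : Fin N → ℝ) (c x : ℝ) : ℝ :=
  if c ≤ x then clippedScore r N δ Y x else - clippedScore r N δ Y (2 * c - x)


lemma logIneqA {u : ℝ} (h0 : 0 ≤ u) (h1 : u ≤ 1) :
    u ^ 2 / 6 ≤ (1 + u) * Real.log (1 + u) - u := by
  set g : ℝ → ℝ := fun v => (1 + v) * Real.log (1 + v) - v - v ^ 2 / 6 with hg
  have key : ∀ v ∈ Set.Icc (0:ℝ) 1, HasDerivAt g (Real.log (1 + v) - v / 3) v := by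
    intro v hv
    have hv0 : (0:ℝ) < 1 + v := by nlinarith [hv.1]
    have h1' : HasDerivAt (fun w : ℝ => 1 + w) 1 v := (hasDerivAt_id v).const_add 1
    have h2 : HasDerivAt (fun w : ℝ => Real.log (1 + w)) (1 / (1 + v)) v := by
      simpa using h1'.log hv0.ne'
    have h3 := h1'.mul h2
    have h4 : HasDerivAt (fun w : ℝ => w ^ 2 / 6) (2 * v / 6) v := by
      simpa using (hasDerivAt_pow 2 v).div_const 6
    have h5 := ((h3.sub (hasDerivAt_id v)).sub h4)
    refine h5.congr_deriv ?_
    field_simp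
    ring
  have hmono : MonotoneOn g (Set.Icc (0:ℝ) 1) := by
    apply monotoneOn_of_deriv_nonneg (convex_Icc 0 1)
    · exact fun v hv => (key v hv).continuousAt.continuousWithinAt
    · intro v hv
      rw [interior_Icc] at hv
      exact ((key v (Set.mem_Icc_of_Ioo hv)).differentiableAt).differentiableWithinAt
    · intro v hv
      rw [interior_Icc] at hv
      rw [(key v (Set.mem_Icc_of_Ioo hv)).deriv]
      have hv0 : (0:ℝ) < 1 + v := by nlinarith [hv.1]
      have hlog : Real.log (1 + v) ≥ v / (1 + v) := by
        have := Real.log_le_sub_one_of_pos (x := (1 + v)⁻¹) (by positivity)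
        rw [Real.log_inv] at this
        have h' : (1 + v)⁻¹ - 1 = -(v / (1 + v)) := by field_simp; ring
        linarith [this, h'.ge]
      have h3v : v / (1 + v) ≥ v / 3 := by
        apply div_le_div_of_nonneg_left hv.1.le hv0
        linarith [hv.2]
      linarith
  have h00 : g 0 = 0 := by simp [hg]
  have := hmono (Set.mem_Icc.2 ⟨le_refl 0, zero_le_one⟩) (Set.mem_Icc.2 ⟨h0, h1⟩) h0
  rw [h00] at this
  simp only [hg] at this
  linarith


lemma logIneqB {u : ℝ} (h0 : 0 ≤ u) (h1 : u < 1) :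
    u ^ 2 / 6 ≤ u + (1 - u) * Real.log (1 - u) := by
  set g : ℝ → ℝ := fun v => v + (1 - v) * Real.log (1 - v) - v ^ 2 / 6 with hg
  have key : ∀ v ∈ Set.Icc (0:ℝ) u, HasDerivAt g (-Real.log (1 - v) - v / 3) v := by
    intro v hv
    have hv0 : (0:ℝ) < 1 - v := by nlinarith [hv.2]
    have h1' : HasDerivAt (fun w : ℝ => 1 - w) (-1) v := by
      simpa using (hasDerivAt_id v).const_sub 1
    have h2 : HasDerivAt (fun w : ℝ => Real.log (1 - w)) (-1 / (1 - v)) v := by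
      simpa using h1'.log hv0.ne'
    have h3 := h1'.mul h2
    have h4 : HasDerivAt (fun w : ℝ => w ^ 2 / 6) (2 * v / 6) v := by
      simpa using (hasDerivAt_pow 2 v).div_const 6
    have h5 := (((hasDerivAt_id v).add h3).sub h4)
    refine h5.congr_deriv ?_
    field_simp
    ring
  have hmono : MonotoneOn g (Set.Icc (0:ℝ) u) := by
    apply monotoneOn_of_deriv_nonneg (convex_Icc 0 u)
    · exact fun v hv => (key v hv).continuousAt.continuousWithinAt
    · intro v hv
      have hv' : v ∈ Set.Icc (0:ℝ) u := interior_subset hv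
      exact ((key v hv').differentiableAt).differentiableWithinAt
    · intro v hv
      have hv' : v ∈ Set.Icc (0:ℝ) u := interior_subset hv
      rw [(key v hv').deriv]
      have hv0 : (0:ℝ) < 1 - v := by nlinarith [hv'.2]
      have hlog : Real.log (1 - v) ≤ -v := by
        have := Real.log_le_sub_one_of_pos hv0
        linarith
      linarith [hv'.1]
  have h00 : g 0 = 0 := by simp [hg]
  have := hmono (Set.mem_Icc.2 ⟨le_refl 0, h0⟩) (Set.mem_Icc.2 ⟨h0, le_refl u⟩) h0
  rw [h00] at this
  simp only [hg] at this
  linarith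

lemma gauss_pos {r : ℝ} (hr : 0 < r) (z : ℝ) : 0 < gaussDensity r z := by
  have : (0:ℝ) < Real.sqrt (2 * Real.pi * r ^ 2) := Real.sqrt_pos.2 (by positivity)
  exact mul_pos (inv_pos.2 this) (Real.exp_pos _)

lemma gauss_le {r : ℝ} (hr : 0 < r) (z : ℝ) :
    gaussDensity r z ≤ (Real.sqrt (2 * Real.pi * r ^ 2))⁻¹ := by
  have h1 : Real.exp (-z ^ 2 / (2 * r ^ 2)) ≤ 1 := by
    rw [Real.exp_le_one_iff]
    have : (0:ℝ) < 2 * r ^ 2 := by positivity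
    exact div_nonpos_of_nonpos_of_nonneg (neg_nonpos.2 (sq_nonneg z)) this.le
  have h2 : (0:ℝ) ≤ (Real.sqrt (2 * Real.pi * r ^ 2))⁻¹ := by positivity
  calc gaussDensity r z ≤ (Real.sqrt (2 * Real.pi * r ^ 2))⁻¹ * 1 :=
        mul_le_mul_of_nonneg_left h1 h2
    _ = _ := mul_one _

lemma gauss_cont (r : ℝ) : Continuous (gaussDensity r) := by
  unfold gaussDensity
  continuity

lemma densMeasure_prob {f : ℝ → ℝ} (hf : IsDensity f) :
    IsProbabilityMeasure (densMeasure f) := by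
  constructor
  rw [densMeasure, withDensity_apply _ MeasurableSet.univ, setLIntegral_univ,
    ← ofReal_integral_eq_lintegral_ofReal hf.2.1 (ae_of_all _ hf.1), hf.2.2, ENNReal.ofReal_one]

lemma integral_densMeasure {f : ℝ → ℝ} (hf : IsDensity f) (g : ℝ → ℝ) :
    (∫ y, g y ∂(densMeasure f)) = ∫ y, f y * g y := by
  rw [densMeasure]
  rw [show (fun y => ENNReal.ofReal (f y)) = (fun y => ((f y).toNNReal : ENNReal)) from rfl]
  rw [integral_withDensity_eq_integral_smul₀ (f := fun y => (f y).toNNReal)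
    (measurable_real_toNNReal.comp_aemeasurable hf.2.1.aemeasurable) g]
  congr 1
  funext y
  rw [NNReal.smul_def, smul_eq_mul, Real.coe_toNNReal _ (hf.1 y)]

lemma smoothed_pos {f : ℝ → ℝ} (hf : IsDensity f) {r : ℝ} (hr : 0 < r) (x : ℝ) :
    0 < smoothed f r x := by
  rw [smoothed]
  have hint : Integrable (fun y => f y * gaussDensity r (x - y)) := by
    have := hf.2.1.bdd_mul (f := fun y => gaussDensity r (x - y))
      ((gauss_cont r).comp (continuous_const.sub continuous_id)).aestronglyMeasurable
      (ae_of_all _ fun y => by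
        rw [Real.norm_eq_abs, abs_of_nonneg (gauss_pos hr _).le]; exact gauss_le hr _)
    apply this.congr
    exact ae_of_all _ fun y => mul_comm _ _
  have hnn : 0 ≤ fun y => f y * gaussDensity r (x - y) :=
    fun y => mul_nonneg (hf.1 y) (gauss_pos hr _).le
  rcases (integral_nonneg hnn).lt_or_eq with h | h
  · exact h
  · exfalso
    have h0 : (fun y => f y * gaussDensity r (x - y)) =ᵐ[volume] 0 :=
      (integral_eq_zero_iff_of_nonneg hnn hint).1 h.symm
    have hf0 : f =ᵐ[volume] 0 := by
      filter_upwards [h0] with y hy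
      rcases mul_eq_zero.1 hy with h' | h'
      · exact h'
      · exact absurd h' (gauss_pos hr _).ne'
    have : (∫ y, f y) = 0 := by
      rw [integral_congr_ae hf0]; simp
    rw [hf.2.2] at this
    norm_num at this

lemma integral_pi_pow (ν : Measure ℝ) [IsProbabilityMeasure ν] (N : ℕ) (g : ℝ → ℝ) :
    (∫ Y : Fin N → ℝ, ∏ i, g (Y i) ∂(Measure.pi fun _ : Fin N => ν)) = (∫ y, g y ∂ν) ^ N := by
  letI : MeasureSpace ℝ := ⟨ν⟩
  haveI : SigmaFinite (volume : Measure ℝ) := inferInstanceAs (SigmaFinite ν)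
  have := MeasureTheory.integral_fintype_prod_eq_pow (𝕜 := ℝ) (ι := Fin N) g (μ := ν)
  rw [Fintype.card_fin] at this
  exact this

lemma integrable_pi_prod (ν : Measure ℝ) [IsProbabilityMeasure ν] (N : ℕ) (g : ℝ → ℝ)
    (hg : Integrable g ν) :
    Integrable (fun Y : Fin N → ℝ => ∏ i, g (Y i)) (Measure.pi fun _ : Fin N => ν) := by
  letI : MeasureSpace ℝ := ⟨ν⟩
  haveI : SigmaFinite (volume : Measure ℝ) := inferInstanceAs (SigmaFinite ν)
  exact MeasureTheory.Integrable.fintype_prod (𝕜 := ℝ) (f := fun _ : Fin N => g) (fun _ => hg)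

lemma chernoff_aux (ν : Measure ℝ) [IsProbabilityMeasure ν]
    (w : ℝ → ℝ) (hw : Continuous w) (b : ℝ) (hb : 0 < b)
    (hw0 : ∀ y, 0 ≤ w y) (hwb : ∀ y, w y ≤ b)
    (m : ℝ) (hm : (∫ y, w y ∂ν) = m)
    (N : ℕ) (lam a : ℝ) :
    (Measure.pi fun _ : Fin N => ν) {Y | Real.exp (lam * a) ≤ Real.exp (lam * ∑ i, w (Y i))}
      ≤ ENNReal.ofReal (Real.exp ((N : ℝ) * (m * (Real.exp (lam * b) - 1) / b) - lam * a)) := by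
  set g : ℝ → ℝ := fun y => Real.exp (lam * w y) with hg
  have hgc : Continuous g := Real.continuous_exp.comp (continuous_const.mul hw)
  have hgb : ∀ y, g y ≤ Real.exp (|lam| * b) := by
    intro y
    apply Real.exp_le_exp.2
    calc lam * w y ≤ |lam * w y| := le_abs_self _
      _ = |lam| * |w y| := abs_mul _ _
      _ ≤ |lam| * b := by
          apply mul_le_mul_of_nonneg_left _ (abs_nonneg lam)
          rw [abs_of_nonneg (hw0 y)]; exact hwb y
  have hIg : Integrable g ν := by
    refine Integrable.mono' (integrable_const (Real.exp (|lam| * b)))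
      hgc.aestronglyMeasurable (ae_of_all _ fun y => ?_)
    rw [Real.norm_eq_abs, abs_of_nonneg (Real.exp_pos _).le]
    exact hgb y
  have hIw : Integrable w ν := by
    refine Integrable.mono' (integrable_const b) hw.aestronglyMeasurable
      (ae_of_all _ fun y => ?_)
    rw [Real.norm_eq_abs, abs_of_nonneg (hw0 y)]; exact hwb y
  -- pointwise convexity bound
  have hpt : ∀ y, g y ≤ 1 + w y * ((Real.exp (lam * b) - 1) / b) := by
    intro y
    have h0 : 0 ≤ w y / b := div_nonneg (hw0 y) hb.le
    have h1 : w y / b ≤ 1 := (div_le_one hb).2 (hwb y)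
    have hcv := convexOn_exp.2 (Set.mem_univ 0) (Set.mem_univ (lam * b))
      (by linarith : (0:ℝ) ≤ 1 - w y / b) h0 (by ring)
    rw [smul_eq_mul, smul_eq_mul, smul_eq_mul, smul_eq_mul] at hcv
    have harg : (1 - w y / b) * 0 + w y / b * (lam * b) = lam * w y := by
      field_simp
      ring
    rw [harg, Real.exp_zero] at hcv
    have : w y / b * (Real.exp (lam * b) - 1) = w y * ((Real.exp (lam * b) - 1) / b) := by
      ring
    simp only [hg]
    nlinarith [hcv]
  -- MGF bound
  have hM : (∫ y, g y ∂ν) ≤ Real.exp (m * (Real.exp (lam * b) - 1) / b) := by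
    have hRHS : Integrable (fun y => 1 + w y * ((Real.exp (lam * b) - 1) / b)) ν :=
      (integrable_const 1).add (hIw.mul_const _)
    calc (∫ y, g y ∂ν) ≤ ∫ y, 1 + w y * ((Real.exp (lam * b) - 1) / b) ∂ν :=
          integral_mono hIg hRHS hpt
      _ = 1 + m * ((Real.exp (lam * b) - 1) / b) := by
          rw [integral_add (integrable_const 1) (hIw.mul_const _), integral_const,
            integral_mul_const, hm]
          simp
      _ ≤ Real.exp (m * (Real.exp (lam * b) - 1) / b) := by
          rw [show m * (Real.exp (lam * b) - 1) / b
              = m * ((Real.exp (lam * b) - 1) / b) by ring]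
          linarith [Real.add_one_le_exp (m * ((Real.exp (lam * b) - 1) / b))]
  have hMnn : 0 ≤ ∫ y, g y ∂ν := integral_nonneg fun y => (Real.exp_pos _).le
  set P := Measure.pi fun _ : Fin N => ν with hP
  haveI : IsProbabilityMeasure P := by
    rw [hP]; infer_instance
  -- rewrite the set
  have hset : {Y : Fin N → ℝ | Real.exp (lam * a) ≤ Real.exp (lam * ∑ i, w (Y i))}
      = {Y : Fin N → ℝ | Real.exp (lam * a) ≤ ∏ i, g (Y i)} := by
    ext Y
    simp only [Set.mem_setOf_eq, hg, Finset.mul_sum, Real.exp_sum]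
  have hIF : Integrable (fun Y : Fin N → ℝ => ∏ i, g (Y i)) P := integrable_pi_prod ν N g hIg
  have hmarkov := mul_meas_ge_le_integral_of_nonneg
    (ae_of_all P fun Y => Finset.prod_nonneg fun i _ => (Real.exp_pos _).le) hIF
    (Real.exp (lam * a))
  rw [integral_pi_pow ν N g] at hmarkov
  have hpow : (∫ y, g y ∂ν) ^ N ≤ Real.exp ((N:ℝ) * (m * (Real.exp (lam * b) - 1) / b)) := by
    rw [Real.exp_nat_mul]
    exact pow_le_pow_left₀ hMnn hM N
  rw [hset]
  have hfin : P {Y : Fin N → ℝ | Real.exp (lam * a) ≤ ∏ i, g (Y i)} ≠ ⊤ := measure_ne_top _ _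
  rw [← ENNReal.ofReal_toReal hfin]
  apply ENNReal.ofReal_le_ofReal
  have hεpos : 0 < Real.exp (lam * a) := Real.exp_pos _
  have h1 : (P {Y : Fin N → ℝ | Real.exp (lam * a) ≤ ∏ i, g (Y i)}).toReal
      ≤ Real.exp ((N:ℝ) * (m * (Real.exp (lam * b) - 1) / b)) / Real.exp (lam * a) := by
    rw [le_div_iff₀ hεpos]
    calc (P _).toReal * Real.exp (lam * a)
        = Real.exp (lam * a) * (P {Y : Fin N → ℝ | Real.exp (lam * a) ≤ ∏ i, g (Y i)}).toReal := by
          ring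
      _ ≤ (∫ y, g y ∂ν) ^ N := hmarkov
      _ ≤ _ := hpow
  calc (P _).toReal ≤ _ := h1
    _ = Real.exp ((N:ℝ) * (m * (Real.exp (lam * b) - 1) / b) - lam * a) := by
        rw [Real.exp_sub]

/-- Pointwise density estimate guarantee: for a fixed point `x`, if
`N ≥ 3 log(2/δ)/(f_r(x)·r)` then with probability at least `1 − δ` over the `N` samples,
`|f̂_r(x) − f_r(x)| ≤ √(3 f_r(x) log(2/δ)/(N r))`. -/
theorem pointwise_density_estimate
    (fStar : ℝ → ℝ) (r : ℝ) (hr : 0 < r) (hf : IsDensity fStar)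
    (N : ℕ) (δ : ℝ) (hδ : 0 < δ) (hδ1 : δ < 1) (x : ℝ)
    (hN : 3 * Real.log (2 / δ) / (smoothed fStar r x * r) ≤ (N : ℝ)) :
    (Measure.pi fun _ : Fin N => densMeasure fStar)
      {Y | |kde r N Y x - smoothed fStar r x| ≤
            Real.sqrt (3 * smoothed fStar r x * Real.log (2 / δ) / (N * r))}
      ≥ ENNReal.ofReal (1 - δ) := by
  have hm : 0 < smoothed fStar r x := smoothed_pos hf hr x
  set ν : Measure ℝ := densMeasure fStar with hνdef
  haveI : IsProbabilityMeasure ν := densMeasure_prob hf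
  set P : Measure (Fin N → ℝ) := Measure.pi fun _ : Fin N => ν with hPdef
  haveI : IsProbabilityMeasure P := by rw [hPdef]; infer_instance
  set m := smoothed fStar r x with hmdef
  set L := Real.log (2 / δ) with hLdef
  set t := Real.sqrt (3 * m * L / (N * r)) with htdef
  have hL : 0 < L := Real.log_pos (by rw [lt_div_iff₀ hδ]; linarith)
  set s := Real.sqrt (2 * Real.pi) with hsdef
  have hs : 0 < s := Real.sqrt_pos.2 (by positivity)
  have hs2 : 2 ≤ s := by
    have h4 : (4:ℝ) ≤ 2 * Real.pi := by nlinarith [Real.pi_gt_three]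
    calc (2:ℝ) = Real.sqrt 4 := by
          rw [show (4:ℝ) = 2 ^ 2 by norm_num, Real.sqrt_sq (by norm_num : (0:ℝ) ≤ 2)]
      _ ≤ Real.sqrt (2 * Real.pi) := Real.sqrt_le_sqrt h4
      _ = s := hsdef.symm
  set b := (s * r)⁻¹ with hbdef
  have hb : 0 < b := by positivity
  have hsq : Real.sqrt (2 * Real.pi * r ^ 2) = s * r := by
    rw [show 2 * Real.pi * r ^ 2 = (2 * Real.pi) * r ^ 2 by ring,
      Real.sqrt_mul (by positivity), Real.sqrt_sq hr.le, hsdef]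
  -- the kernel function
  set w : ℝ → ℝ := fun y => gaussDensity r (x - y) with hwdef
  have hwcont : Continuous w := (gauss_cont r).comp (continuous_const.sub continuous_id)
  have hw0 : ∀ y, 0 ≤ w y := fun y => (gauss_pos hr _).le
  have hwb : ∀ y, w y ≤ b := fun y => by
    rw [hbdef, ← hsq]; exact gauss_le hr _
  have hmean : (∫ y, w y ∂ν) = m := integral_densMeasure hf w
  -- basic numeric facts
  have hNpos : 0 < (N : ℝ) := lt_of_lt_of_le (by positivity) hN
  have hNr : 0 < (N : ℝ) * r := mul_pos hNpos hr
  have ht2 : t ^ 2 = 3 * m * L / ((N : ℝ) * r) := Real.sq_sqrt (by positivity)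
  have ht0 : 0 < t := Real.sqrt_pos.2 (by positivity)
  have h3L : 3 * L ≤ (N : ℝ) * (m * r) := (div_le_iff₀ (by positivity)).1 hN
  have htm : t ≤ m := by
    have h1 : 3 * m * L / ((N : ℝ) * r) ≤ m ^ 2 := by
      rw [div_le_iff₀ hNr]; nlinarith
    calc t ≤ Real.sqrt (m ^ 2) := Real.sqrt_le_sqrt h1
      _ = m := Real.sqrt_sq hm.le
  set u := t / m with hudef
  have hu0 : 0 ≤ u := by positivity
  have hu1 : u ≤ 1 := (div_le_one hm).2 htm
  have htu : t = m * u := by rw [hudef]; field_simp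
  have hNt2 : (N : ℝ) * t ^ 2 = 3 * m * L / r := by
    rw [ht2]; field_simp
  have hkey : L ≤ (N : ℝ) * m / b * (u ^ 2 / 6) := by
    have e1 : (N : ℝ) * m / b * (u ^ 2 / 6) = ((N : ℝ) * t ^ 2) * (s * r) / (6 * m) := by
      rw [htu, hbdef]; field_simp
    rw [e1, hNt2]
    have e2 : 3 * m * L / r * (s * r) / (6 * m) = L * s / 2 := by
      field_simp; ring
    rw [e2]
    nlinarith
  -- Upper tail
  have hupper : P {Y : Fin N → ℝ | t < kde r N Y x - m} ≤ ENNReal.ofReal (δ / 2) := by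
    set lam := Real.log (1 + u) / b with hlamdef
    have hlam0 : 0 ≤ lam := div_nonneg (Real.log_nonneg (by linarith)) hb.le
    have hexpl : Real.exp (lam * b) = 1 + u := by
      rw [hlamdef, div_mul_cancel₀ _ hb.ne', Real.exp_log (by linarith)]
    refine le_trans (measure_mono ?_)
      (le_trans (chernoff_aux ν w hwcont b hb hw0 hwb m hmean N lam ((N : ℝ) * (m + t))) ?_)
    · intro Y hY
      simp only [Set.mem_setOf_eq] at hY ⊢
      have hS : ∑ i, w (Y i) = (N : ℝ) * kde r N Y x := by
        rw [kde, ← mul_assoc, mul_inv_cancel₀ hNpos.ne', one_mul]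
      apply Real.exp_le_exp.2
      apply mul_le_mul_of_nonneg_left _ hlam0
      rw [hS]
      apply mul_le_mul_of_nonneg_left _ hNpos.le
      linarith
    · apply ENNReal.ofReal_le_ofReal
      have hexp : (N : ℝ) * (m * (Real.exp (lam * b) - 1) / b) - lam * ((N : ℝ) * (m + t))
          ≤ -L := by
        rw [hexpl, hlamdef]
        have e3 : (N : ℝ) * (m * (1 + u - 1) / b) -
            Real.log (1 + u) / b * ((N : ℝ) * (m + t))
            = (N : ℝ) * m / b * (u - (1 + u) * Real.log (1 + u)) := by
          rw [htu]; ring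
        rw [e3]
        have hA := logIneqA hu0 hu1
        calc (N : ℝ) * m / b * (u - (1 + u) * Real.log (1 + u))
            ≤ (N : ℝ) * m / b * (-(u ^ 2 / 6)) :=
              mul_le_mul_of_nonneg_left (by linarith) (by positivity)
          _ = -((N : ℝ) * m / b * (u ^ 2 / 6)) := by ring
          _ ≤ -L := neg_le_neg hkey
      calc Real.exp _ ≤ Real.exp (-L) := Real.exp_le_exp.2 hexp
        _ = δ / 2 := by
          rw [hLdef, Real.exp_neg, Real.exp_log (by positivity), inv_div]
  -- Lower tail
  have hlower : P {Y : Fin N → ℝ | t < m - kde r N Y x} ≤ ENNReal.ofReal (δ / 2) := by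
    rcases lt_or_eq_of_le htm with htm' | htm'
    · have hu1' : u < 1 := (div_lt_one hm).2 htm'
      set lam := Real.log (1 - u) / b with hlamdef
      have hlam0 : lam ≤ 0 := div_nonpos_of_nonpos_of_nonneg
        (Real.log_nonpos (by linarith) (by linarith)) hb.le
      have hexpl : Real.exp (lam * b) = 1 - u := by
        rw [hlamdef, div_mul_cancel₀ _ hb.ne', Real.exp_log (by linarith)]
      refine le_trans (measure_mono ?_)
        (le_trans (chernoff_aux ν w hwcont b hb hw0 hwb m hmean N lam ((N : ℝ) * (m - t))) ?_)
      · intro Y hY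
        simp only [Set.mem_setOf_eq] at hY ⊢
        have hS : ∑ i, w (Y i) = (N : ℝ) * kde r N Y x := by
          rw [kde, ← mul_assoc, mul_inv_cancel₀ hNpos.ne', one_mul]
        apply Real.exp_le_exp.2
        rw [hS]
        apply mul_le_mul_of_nonpos_left _ hlam0
        apply mul_le_mul_of_nonneg_left _ hNpos.le
        linarith
      · apply ENNReal.ofReal_le_ofReal
        have hexp : (N : ℝ) * (m * (Real.exp (lam * b) - 1) / b) - lam * ((N : ℝ) * (m - t))
            ≤ -L := by
          rw [hexpl, hlamdef]
          have e3 : (N : ℝ) * (m * (1 - u - 1) / b) -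
              Real.log (1 - u) / b * ((N : ℝ) * (m - t))
              = (N : ℝ) * m / b * (-(u + (1 - u) * Real.log (1 - u))) := by
            rw [htu]; ring
          rw [e3]
          have hB := logIneqB hu0 hu1'
          calc (N : ℝ) * m / b * (-(u + (1 - u) * Real.log (1 - u)))
              ≤ (N : ℝ) * m / b * (-(u ^ 2 / 6)) :=
                mul_le_mul_of_nonneg_left (by linarith) (by positivity)
            _ = -((N : ℝ) * m / b * (u ^ 2 / 6)) := by ring
            _ ≤ -L := neg_le_neg hkey
        calc Real.exp _ ≤ Real.exp (-L) := Real.exp_le_exp.2 hexp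
          _ = δ / 2 := by
            rw [hLdef, Real.exp_neg, Real.exp_log (by positivity), inv_div]
    · have hsub : {Y : Fin N → ℝ | t < m - kde r N Y x} ⊆ (∅ : Set (Fin N → ℝ)) := by
        intro Y hY
        simp only [Set.mem_setOf_eq] at hY
        have hkde : 0 ≤ kde r N Y x := by
          rw [kde]
          exact mul_nonneg (by positivity)
            (Finset.sum_nonneg fun i _ => (gauss_pos hr _).le)
        rw [← htm'] at hY
        linarith
      calc P _ ≤ P ∅ := measure_mono hsub
        _ = 0 := measure_empty
        _ ≤ _ := zero_le
  -- Combine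
  set S := {Y : Fin N → ℝ | |kde r N Y x - m| ≤ t} with hSdef
  have hcompl : Sᶜ ⊆ {Y : Fin N → ℝ | t < kde r N Y x - m}
      ∪ {Y : Fin N → ℝ | t < m - kde r N Y x} := by
    intro Y hY
    simp only [hSdef, Set.mem_compl_iff, Set.mem_setOf_eq, not_le] at hY
    rcases lt_abs.1 hY with h | h
    · exact Or.inl h
    · exact Or.inr (by simp only [Set.mem_setOf_eq]; linarith)
  have hbad : P Sᶜ ≤ ENNReal.ofReal δ := by
    calc P Sᶜ ≤ P ({Y : Fin N → ℝ | t < kde r N Y x - m}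
        ∪ {Y : Fin N → ℝ | t < m - kde r N Y x}) := measure_mono hcompl
      _ ≤ P {Y : Fin N → ℝ | t < kde r N Y x - m}
          + P {Y : Fin N → ℝ | t < m - kde r N Y x} := measure_union_le _ _
      _ ≤ ENNReal.ofReal (δ / 2) + ENNReal.ofReal (δ / 2) := add_le_add hupper hlower
      _ = ENNReal.ofReal δ := by
          rw [← ENNReal.ofReal_add (by positivity) (by positivity)]
          norm_num
  have huniv : (1 : ENNReal) ≤ P S + ENNReal.ofReal δ := by
    calc (1 : ENNReal) = P Set.univ := measure_univ.symm
      _ = P (S ∪ Sᶜ) := by rw [Set.union_compl_self]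
      _ ≤ P S + P Sᶜ := measure_union_le _ _
      _ ≤ P S + ENNReal.ofReal δ := add_le_add_right hbad _
  rw [ge_iff_le, show ENNReal.ofReal (1 - δ) = 1 - ENNReal.ofReal δ by
    rw [ENNReal.ofReal_sub _ hδ.le, ENNReal.ofReal_one]]
  exact tsub_le_iff_right.2 huniv
end

section
/- Let f* be an arbitrary probability density on ℝ (symmetry not required). Let ε ∈ ℝ and x ∈ ℝ with f_r(x) > 0 be such that (8·|ε|/r)·√(log(1/(r·f_r(x)))) ≤ 1. Then f_r(x + ε)/f_r(x) ≤ 1 + (10·|ε|/r)·√(log(1/(f_r(x)·r))). -/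
open MeasureTheory Real Filter

private lemma decay_aux (r s t b : ℝ) (hr : 0 < r) (hb : 0 ≤ b) (hs : r ≤ s) (hst : s ≤ t) :
    (t + b) * Real.exp (-t ^ 2 / (2 * r ^ 2)) ≤ (s + b) * Real.exp (-s ^ 2 / (2 * r ^ 2)) := by
  have hs0 : 0 < s := hr.trans_le hs
  have h2r : (0:ℝ) < 2 * r ^ 2 := by positivity
  have h3 : 2 * r ^ 2 ≤ (s + b) * (t + s) := by nlinarith
  have key : (t - s) * (2 * r ^ 2) ≤ (s + b) * (t ^ 2 - s ^ 2) := by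
    calc (t - s) * (2 * r ^ 2) ≤ (t - s) * ((s + b) * (t + s)) :=
          mul_le_mul_of_nonneg_left h3 (by linarith)
      _ = (s + b) * (t ^ 2 - s ^ 2) := by ring
  have h2 : t + b ≤ (s + b) * ((t ^ 2 - s ^ 2) / (2 * r ^ 2) + 1) := by
    have e1 : (s + b) * ((t ^ 2 - s ^ 2) / (2 * r ^ 2) + 1)
        = (s + b) * (t ^ 2 - s ^ 2) / (2 * r ^ 2) + (s + b) := by ring
    rw [e1]
    have : (t - s) ≤ (s + b) * (t ^ 2 - s ^ 2) / (2 * r ^ 2) := by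
      rw [le_div_iff₀ h2r]; linarith [key]
    linarith
  have h1 : t + b ≤ (s + b) * Real.exp ((t ^ 2 - s ^ 2) / (2 * r ^ 2)) := by
    have he := Real.add_one_le_exp ((t ^ 2 - s ^ 2) / (2 * r ^ 2))
    calc t + b ≤ (s + b) * ((t ^ 2 - s ^ 2) / (2 * r ^ 2) + 1) := h2
      _ ≤ (s + b) * Real.exp ((t ^ 2 - s ^ 2) / (2 * r ^ 2)) :=
          mul_le_mul_of_nonneg_left he (by linarith)
  calc (t + b) * Real.exp (-t ^ 2 / (2 * r ^ 2))
      ≤ ((s + b) * Real.exp ((t ^ 2 - s ^ 2) / (2 * r ^ 2))) * Real.exp (-t ^ 2 / (2 * r ^ 2)) :=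
        mul_le_mul_of_nonneg_right h1 (Real.exp_nonneg _)
    _ = (s + b) * Real.exp (-s ^ 2 / (2 * r ^ 2)) := by
        rw [mul_assoc, ← Real.exp_add]; congr 2; ring

set_option maxHeartbeats 1000000 in
/-- Close-by densities are close: if
`(8|ε|/r)·√(log(1/(r f_r(x)))) ≤ 1` then
`f_r(x+ε)/f_r(x) ≤ 1 + (10|ε|/r)·√(log(1/(f_r(x)·r)))`. -/
theorem close_by_densities_close
    (fStar : ℝ → ℝ) (r : ℝ) (hr : 0 < r) (hf : IsDensity fStar)
    (x ε : ℝ) (hx : 0 < smoothed fStar r x)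
    (hcond : (8 * |ε| / r) *
        Real.sqrt (Real.log (1 / (r * smoothed fStar r x))) ≤ 1) :
    smoothed fStar r (x + ε) / smoothed fStar r x ≤
      1 + (10 * |ε| / r) * Real.sqrt (Real.log (1 / (smoothed fStar r x * r))) := by
  obtain ⟨hf0, hfInt, hf1⟩ := hf
  have hπ : 3.141592 < Real.pi := Real.pi_gt_d6
  have hr0 : (r:ℝ) ≠ 0 := ne_of_gt hr
  set F := smoothed fStar r x with hFdef
  set L := Real.log (1 / (r * F)) with hLdef
  set sL := Real.sqrt L with hsLdef
  set C := (Real.sqrt (2 * Real.pi * r ^ 2))⁻¹ with hCdef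
  have hCpos : 0 < C := by rw [hCdef]; positivity
  have hg_eq : ∀ u : ℝ, gaussDensity r u = C * Real.exp (-u ^ 2 / (2 * r ^ 2)) := by
    intro u; rw [hCdef]; rfl
  have hsqrt2pi : Real.sqrt (2 * Real.pi * r ^ 2) = Real.sqrt (2 * Real.pi) * r := by
    rw [Real.sqrt_mul (by positivity), Real.sqrt_sq hr.le]
  have h2pi_pos : (0:ℝ) < Real.sqrt (2 * Real.pi) := by positivity
  have hrC : r * C = (Real.sqrt (2 * Real.pi))⁻¹ := by
    rw [hCdef, hsqrt2pi, mul_inv]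
    field_simp
  have hgpos : ∀ u : ℝ, 0 < gaussDensity r u := by
    intro u; rw [hg_eq u]; positivity
  have hgle : ∀ u : ℝ, gaussDensity r u ≤ C := by
    intro u
    rw [hg_eq u]
    have h1 : Real.exp (-u ^ 2 / (2 * r ^ 2)) ≤ 1 := by
      rw [Real.exp_le_one_iff]
      apply div_nonpos_of_nonpos_of_nonneg (neg_nonpos.2 (sq_nonneg u)) (by positivity)
    calc C * Real.exp (-u ^ 2 / (2 * r ^ 2)) ≤ C * 1 :=
          mul_le_mul_of_nonneg_left h1 hCpos.le
      _ = C := mul_one C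
  have hgmeas : ∀ z : ℝ, AEStronglyMeasurable (fun y => gaussDensity r (z - y))
      (volume : Measure ℝ) := by
    intro z
    apply Continuous.aestronglyMeasurable
    unfold gaussDensity
    fun_prop
  have hInt : ∀ z : ℝ, Integrable (fun y => fStar y * gaussDensity r (z - y)) := by
    intro z
    have h1 : Integrable (fun y => gaussDensity r (z - y) * fStar y) :=
      hfInt.bdd_mul (c := C) (hgmeas z) (Filter.Eventually.of_forall fun y => by
        rw [Real.norm_eq_abs, abs_of_nonneg (hgpos _).le]; exact hgle _)
    simpa [mul_comm] using h1
  have hFle : F ≤ C := by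
    have h1 : (∫ y, fStar y * gaussDensity r (x - y)) ≤ ∫ y, fStar y * C := by
      apply integral_mono_of_nonneg
      · filter_upwards with y; exact mul_nonneg (hf0 y) (hgpos _).le
      · exact hfInt.mul_const C
      · filter_upwards with y; exact mul_le_mul_of_nonneg_left (hgle _) (hf0 y)
    calc F = ∫ y, fStar y * gaussDensity r (x - y) := rfl
      _ ≤ ∫ y, fStar y * C := h1
      _ = C := by rw [integral_mul_const, hf1, one_mul]
  have hrF : 0 < r * F := mul_pos hr hx
  have hexpL : Real.exp L = (r * F)⁻¹ := by
    rw [hLdef, one_div, Real.exp_log (by positivity)]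
  have hLhalf : (1/2 : ℝ) ≤ L := by
    rw [hLdef, Real.le_log_iff_exp_le (by positivity)]
    have h1 : Real.exp (1/2) ≤ Real.sqrt (2 * Real.pi) := by
      rw [Real.le_sqrt (Real.exp_nonneg _) (by positivity)]
      have he1 : Real.exp (1/2) ^ 2 = Real.exp 1 := by
        rw [sq, ← Real.exp_add]; norm_num
      rw [he1]
      linarith [Real.exp_one_lt_d9, hπ]
    have h2 : r * F ≤ (Real.sqrt (2 * Real.pi))⁻¹ := by
      rw [← hrC]; exact mul_le_mul_of_nonneg_left hFle hr.le
    have h3 : Real.sqrt (2 * Real.pi) ≤ 1 / (r * F) := by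
      rw [le_div_iff₀ hrF]
      calc Real.sqrt (2 * Real.pi) * (r * F)
          ≤ Real.sqrt (2 * Real.pi) * (Real.sqrt (2 * Real.pi))⁻¹ :=
            mul_le_mul_of_nonneg_left h2 h2pi_pos.le
        _ = 1 := mul_inv_cancel₀ (ne_of_gt h2pi_pos)
    linarith
  have hL0 : (0:ℝ) ≤ L := by linarith
  have hsLsq : sL ^ 2 = L := by rw [hsLdef]; exact Real.sq_sqrt hL0
  have hsLhalf : (1/2:ℝ) ≤ sL := by
    rw [hsLdef, Real.le_sqrt (by norm_num) hL0]; linarith [hLhalf]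
  have hsLpos : (0:ℝ) < sL := by linarith
  set a := |ε| / r with hadef
  have ha0 : (0:ℝ) ≤ a := by rw [hadef]; positivity
  have habs : |ε| = a * r := by rw [hadef]; field_simp
  have hasl : 8 * (a * sL) ≤ 1 := by
    have heq : 8 * (a * sL) = (8 * |ε| / r) * sL := by rw [hadef]; ring
    linarith [hcond, heq.le, heq.ge]
  have haub : a ≤ sL / 4 := by nlinarith [hasl, hsLsq, hLhalf, hsLpos]
  set s := 2 * r * sL with hsdef
  have hrs : r ≤ s := by
    rw [hsdef]
    linarith [mul_le_mul_of_nonneg_left hsLhalf hr.le]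
  have hs0 : 0 < s := hr.trans_le hrs
  set δ := (s + |ε|) * |ε| / r ^ 2 with hδdef
  have hδ0 : (0:ℝ) ≤ δ := by
    rw [hδdef]
    apply div_nonneg (mul_nonneg (by linarith [abs_nonneg ε]) (abs_nonneg ε)) (by positivity)
  have hδeq : δ = 2 * (a * sL) + a ^ 2 := by
    rw [hδdef, hsdef, hadef]; field_simp
  have hδub : δ ≤ 9/4 * (a * sL) := by
    linarith [hδeq.le, hδeq.ge, mul_le_mul_of_nonneg_left haub ha0]
  have hδ1 : δ ≤ 9/32 := by linarith [hδub, hasl]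
  have hexpδ : Real.exp δ ≤ 1 + 27/4 * (a * sL) := by
    have h1 : Real.exp δ * Real.exp (-δ) = 1 := by rw [← Real.exp_add]; simp
    have h2 := Real.add_one_le_exp (-δ)
    have h3 : Real.exp δ ≤ Real.exp 1 := Real.exp_le_exp.2 (by linarith)
    have h5 : Real.exp δ * (-δ + 1) ≤ 1 := by
      calc Real.exp δ * (-δ + 1) ≤ Real.exp δ * Real.exp (-δ) :=
            mul_le_mul_of_nonneg_left h2 (Real.exp_pos δ).le
        _ = 1 := h1
    have h6 : δ * Real.exp δ ≤ δ * 3 :=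
      mul_le_mul_of_nonneg_left (by linarith [Real.exp_one_lt_d9, h3]) hδ0
    linarith [h5, h6, hδub, hδ0]
  set K := C * (s + |ε| / 2) * Real.exp (-s ^ 2 / (2 * r ^ 2)) / r ^ 2 with hKdef
  have hK0 : (0:ℝ) ≤ K := by
    rw [hKdef]
    apply div_nonneg _ (by positivity)
    apply mul_nonneg (mul_nonneg hCpos.le (by linarith [abs_nonneg ε])) (Real.exp_nonneg _)
  have h2r2 : (0:ℝ) < 2 * r ^ 2 := by positivity
  -- pointwise bound
  have hpt : ∀ u : ℝ, gaussDensity r (u + ε) ≤ gaussDensity r u * Real.exp δ + |ε| * K := by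
    intro u
    by_cases hcase : |u| ≤ s + |ε|
    · have hnum : u ^ 2 - (u + ε) ^ 2 ≤ 2 * (s + |ε|) * |ε| := by
        have e1 : -(u * ε) ≤ |u| * |ε| := by
          rw [← abs_mul]; exact neg_le_abs _
        have e2 : |u| * |ε| ≤ (s + |ε|) * |ε| :=
          mul_le_mul_of_nonneg_right hcase (abs_nonneg ε)
        have e3 : (0:ℝ) ≤ ε ^ 2 := sq_nonneg ε
        linarith [e1, e2, e3]
      have hexp : -(u + ε) ^ 2 / (2 * r ^ 2) ≤ -u ^ 2 / (2 * r ^ 2) + δ := by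
        have key : -(u + ε) ^ 2 / (2 * r ^ 2) ≤ (-u ^ 2 + 2 * (s + |ε|) * |ε|) / (2 * r ^ 2) :=
          div_le_div_of_nonneg_right (by linarith) h2r2.le
        have e2 : (-u ^ 2 + 2 * (s + |ε|) * |ε|) / (2 * r ^ 2) = -u ^ 2 / (2 * r ^ 2) + δ := by
          rw [hδdef]; field_simp
        linarith [key, e2.le, e2.ge]
      calc gaussDensity r (u + ε) = C * Real.exp (-(u + ε) ^ 2 / (2 * r ^ 2)) := hg_eq _
        _ ≤ C * Real.exp (-u ^ 2 / (2 * r ^ 2) + δ) :=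
            mul_le_mul_of_nonneg_left (Real.exp_le_exp.2 hexp) hCpos.le
        _ = gaussDensity r u * Real.exp δ := by rw [Real.exp_add, hg_eq u]; ring
        _ ≤ gaussDensity r u * Real.exp δ + |ε| * K :=
            le_add_of_nonneg_right (mul_nonneg (abs_nonneg ε) hK0)
    · push_neg at hcase
      set v := u + ε with hvdef
      have hv : s ≤ |v| := by
        have h1 : |v + -ε| ≤ |v| + |-ε| := abs_add_le _ _
        have h2 : v + -ε = u := by rw [hvdef]; ring
        rw [h2, abs_neg] at h1
        linarith
      have hz := Real.add_one_le_exp ((v ^ 2 - u ^ 2) / (2 * r ^ 2))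
      have hsplit : Real.exp (-u ^ 2 / (2 * r ^ 2))
          = Real.exp (-v ^ 2 / (2 * r ^ 2)) * Real.exp ((v ^ 2 - u ^ 2) / (2 * r ^ 2)) := by
        rw [← Real.exp_add]; congr 1; ring
      have hE := Real.exp_pos (-v ^ 2 / (2 * r ^ 2))
      have hA : gaussDensity r v ≤ gaussDensity r u
          + C * Real.exp (-v ^ 2 / (2 * r ^ 2)) * ((u ^ 2 - v ^ 2) / (2 * r ^ 2)) := by
        rw [hg_eq v, hg_eq u, hsplit]
        have h7 := mul_le_mul_of_nonneg_left hz (mul_pos hCpos hE).le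
        have heq : C * Real.exp (-v ^ 2 / (2 * r ^ 2)) * ((u ^ 2 - v ^ 2) / (2 * r ^ 2))
            = -(C * Real.exp (-v ^ 2 / (2 * r ^ 2)) * ((v ^ 2 - u ^ 2) / (2 * r ^ 2))) := by
          ring
        rw [heq]
        linarith [h7]
      have hub : |u| ≤ |v| + |ε| := by
        have h1 : |v + -ε| ≤ |v| + |-ε| := abs_add_le _ _
        have h2 : v + -ε = u := by rw [hvdef]; ring
        rw [h2, abs_neg] at h1; exact h1
      have hB : (u ^ 2 - v ^ 2) / (2 * r ^ 2) ≤ |ε| * (|v| + |ε| / 2) / r ^ 2 := by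
        have h1 : u ^ 2 ≤ (|v| + |ε|) ^ 2 := by
          have h4 := mul_self_le_mul_self (abs_nonneg u) hub
          have h5 := sq_abs u
          linarith [h4, h5]
        have h3 : v ^ 2 = |v| ^ 2 := (sq_abs v).symm
        calc (u ^ 2 - v ^ 2) / (2 * r ^ 2) ≤ (2 * |v| * |ε| + |ε| ^ 2) / (2 * r ^ 2) := by
              apply div_le_div_of_nonneg_right _ h2r2.le
              linarith [h1, h3.le, h3.ge]
          _ = |ε| * (|v| + |ε| / 2) / r ^ 2 := by
              have e := sq_abs ε
              field_simp
      have hC2 : C * Real.exp (-v ^ 2 / (2 * r ^ 2)) * ((u ^ 2 - v ^ 2) / (2 * r ^ 2))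
          ≤ |ε| * K := by
        have hd := decay_aux r s |v| (|ε| / 2) hr (by positivity) hrs hv
        calc C * Real.exp (-v ^ 2 / (2 * r ^ 2)) * ((u ^ 2 - v ^ 2) / (2 * r ^ 2))
            ≤ C * Real.exp (-v ^ 2 / (2 * r ^ 2)) * (|ε| * (|v| + |ε| / 2) / r ^ 2) :=
              mul_le_mul_of_nonneg_left hB (mul_nonneg hCpos.le hE.le)
          _ = |ε| * (C * ((|v| + |ε| / 2) * Real.exp (-|v| ^ 2 / (2 * r ^ 2))) / r ^ 2) := by
              rw [sq_abs]; ring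
          _ ≤ |ε| * (C * ((s + |ε| / 2) * Real.exp (-s ^ 2 / (2 * r ^ 2))) / r ^ 2) := by
              apply mul_le_mul_of_nonneg_left _ (abs_nonneg ε)
              apply div_le_div_of_nonneg_right _ (by positivity : (0:ℝ) ≤ r ^ 2)
              exact mul_le_mul_of_nonneg_left hd hCpos.le
          _ = |ε| * K := by rw [hKdef]; ring
      have hge1 : (1:ℝ) ≤ Real.exp δ := by linarith [Real.add_one_le_exp δ, hδ0]
      calc gaussDensity r (u + ε) = gaussDensity r v := by rw [hvdef]
        _ ≤ gaussDensity r u + |ε| * K := by linarith [hA, hC2]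
        _ ≤ gaussDensity r u * Real.exp δ + |ε| * K := by
            linarith [mul_le_mul_of_nonneg_left hge1 (hgpos u).le]
  -- integrate
  have hmain : smoothed fStar r (x + ε) ≤ Real.exp δ * F + |ε| * K := by
    have hle : ∀ y, fStar y * gaussDensity r (x + ε - y) ≤
        fStar y * gaussDensity r (x - y) * Real.exp δ + fStar y * (|ε| * K) := by
      intro y
      have h1 := hpt (x - y)
      rw [show x - y + ε = x + ε - y by ring] at h1
      calc fStar y * gaussDensity r (x + ε - y)
          ≤ fStar y * (gaussDensity r (x - y) * Real.exp δ + |ε| * K) :=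
            mul_le_mul_of_nonneg_left h1 (hf0 y)
        _ = fStar y * gaussDensity r (x - y) * Real.exp δ + fStar y * (|ε| * K) := by ring
    have hI1 : Integrable (fun y => fStar y * gaussDensity r (x - y) * Real.exp δ) :=
      (hInt x).mul_const _
    have hI2 : Integrable (fun y => fStar y * (|ε| * K)) := hfInt.mul_const _
    calc smoothed fStar r (x + ε) = ∫ y, fStar y * gaussDensity r (x + ε - y) := rfl
      _ ≤ ∫ y, (fStar y * gaussDensity r (x - y) * Real.exp δ + fStar y * (|ε| * K)) := by
          apply integral_mono_of_nonneg _ (hI1.add hI2) _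
          · filter_upwards with y; exact mul_nonneg (hf0 y) (hgpos _).le
          · filter_upwards with y; exact hle y
      _ = (∫ y, fStar y * gaussDensity r (x - y) * Real.exp δ) + ∫ y, fStar y * (|ε| * K) :=
          integral_add hI1 hI2
      _ = Real.exp δ * F + |ε| * K := by
          have hFi : (∫ y, fStar y * gaussDensity r (x - y)) = F := rfl
          rw [integral_mul_const, integral_mul_const, hFi, hf1]; ring
  -- estimate |ε| * K
  have hexp2L : Real.exp (-s ^ 2 / (2 * r ^ 2)) = (r * F) ^ 2 := by
    have h1 : -s ^ 2 / (2 * r ^ 2) = -(2 * L) := by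
      rw [hsdef, ← hsLsq]; field_simp
    rw [h1, show (2:ℝ) * L = L + L by ring, Real.exp_neg, Real.exp_add, hexpL,
      ← mul_inv, inv_inv, sq]
  have h2sqrt : (2:ℝ) ≤ Real.sqrt (2 * Real.pi) := by
    rw [Real.le_sqrt (by norm_num) (by positivity)]; linarith [hπ]
  have hCr_le : r * C ≤ 1/2 := by
    rw [hrC]
    have := inv_anti₀ (by norm_num : (0:ℝ) < 2) h2sqrt
    linarith [this]
  have hrF_le : r * F ≤ 1/2 := by
    have h2 : r * F ≤ r * C := mul_le_mul_of_nonneg_left hFle hr.le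
    linarith
  have hKF : |ε| * K ≤ 17/32 * (a * sL) * F := by
    have hK2 : K = C * (s + |ε| / 2) * F ^ 2 := by
      rw [hKdef, hexp2L]; field_simp
    have hs_ub : s + |ε| / 2 ≤ 17/8 * (r * sL) := by
      rw [hsdef, habs]
      linarith [mul_le_mul_of_nonneg_right haub hr.le]
    have step1 : |ε| * K ≤ (a * r) * (C * (17/8 * (r * sL)) * F ^ 2) := by
      rw [habs, hK2]
      apply mul_le_mul_of_nonneg_left _ (by positivity : (0:ℝ) ≤ a * r)
      exact mul_le_mul_of_nonneg_right (mul_le_mul_of_nonneg_left hs_ub hCpos.le) (sq_nonneg F)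
    have step2 : (a * r) * (C * (17/8 * (r * sL)) * F ^ 2)
        = 17/8 * (a * sL) * ((r * C) * ((r * F) * F)) := by ring
    have step3 : (r * C) * ((r * F) * F) ≤ (1/2) * ((1/2) * F) := by
      apply mul_le_mul hCr_le (mul_le_mul_of_nonneg_right hrF_le hx.le)
        (mul_nonneg hrF.le hx.le) (by norm_num)
    calc |ε| * K ≤ 17/8 * (a * sL) * ((r * C) * ((r * F) * F)) := by
          rw [← step2]; exact step1
      _ ≤ 17/8 * (a * sL) * ((1/2) * ((1/2) * F)) :=
          mul_le_mul_of_nonneg_left step3 (by positivity)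
      _ = 17/32 * (a * sL) * F := by ring
  have hfinal : smoothed fStar r (x + ε) ≤ (1 + 10 * (a * sL)) * F := by
    have h1 : Real.exp δ * F ≤ (1 + 27/4 * (a * sL)) * F :=
      mul_le_mul_of_nonneg_right hexpδ hx.le
    linarith [hmain, hKF, h1, mul_nonneg (mul_nonneg ha0 hsLpos.le) hx.le]
  rw [div_le_iff₀ hx, mul_comm F r, ← hLdef, ← hsLdef]
  have heq : (1 + 10 * |ε| / r * sL) * F = (1 + 10 * (a * sL)) * F := by
    rw [hadef]; ring
  calc smoothed fStar r (x + ε) ≤ (1 + 10 * (a * sL)) * F := hfinal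
    _ = (1 + 10 * |ε| / r * sL) * F := heq.symm
end

section
/- There is a universal constant C > 0 such that the following holds. Let f* be an arbitrary probability density on ℝ, and let s_r be the score function of its r-smoothing f_r. For every δ ∈ (0,1), Pr_{x∼f_r}[ |s_r(x)| > (C/r)·√(log(2/δ)) ] ≤ δ. In particular, the constant C = 2√2 suffices. -/
open MeasureTheory Real Filter

/-! ### Auxiliary lemmas -/

namespace ScoreSubg

variable {f : ℝ → ℝ} {r : ℝ}

lemma sqrt_pos_of (hr : 0 < r) : 0 < Real.sqrt (2 * Real.pi * r ^ 2) := by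
  apply Real.sqrt_pos.2
  positivity

lemma gauss_pos (hr : 0 < r) (u : ℝ) : 0 < gaussDensity r u := by
  unfold gaussDensity
  have := sqrt_pos_of hr
  positivity

lemma gauss_le (hr : 0 < r) (u : ℝ) :
    gaussDensity r u ≤ (Real.sqrt (2 * Real.pi * r ^ 2))⁻¹ := by
  unfold gaussDensity
  have h1 : Real.exp (-u ^ 2 / (2 * r ^ 2)) ≤ 1 := by
    apply Real.exp_le_one_iff.2
    have : (0:ℝ) < 2 * r ^ 2 := by positivity
    apply div_nonpos_of_nonpos_of_nonneg (by nlinarith [sq_nonneg u]) this.le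
  have h2 : (0:ℝ) ≤ (Real.sqrt (2 * Real.pi * r ^ 2))⁻¹ := by positivity
  calc (Real.sqrt (2 * Real.pi * r ^ 2))⁻¹ * Real.exp (-u ^ 2 / (2 * r ^ 2))
      ≤ (Real.sqrt (2 * Real.pi * r ^ 2))⁻¹ * 1 := by
        apply mul_le_mul_of_nonneg_left h1 h2
    _ = (Real.sqrt (2 * Real.pi * r ^ 2))⁻¹ := mul_one _

lemma gauss_continuous (hr : 0 < r) : Continuous (gaussDensity r) := by
  unfold gaussDensity
  fun_prop

lemma abs_mul_exp_le (v : ℝ) : |v| * Real.exp (-v ^ 2 / 2) ≤ 1 := by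
  have h1 : |v| ≤ Real.exp (v ^ 2 / 2) := by
    have h2 : v ^ 2 / 2 + 1 ≤ Real.exp (v ^ 2 / 2) := Real.add_one_le_exp _
    nlinarith [sq_abs v, sq_nonneg (|v| - 1)]
  have h3 : Real.exp (-v ^ 2 / 2) = (Real.exp (v ^ 2 / 2))⁻¹ := by
    rw [← Real.exp_neg]; ring_nf
  rw [h3]
  have h4 : (0:ℝ) < Real.exp (v ^ 2 / 2) := Real.exp_pos _
  rw [mul_inv_le_iff₀ h4, one_mul]
  exact h1

lemma gauss_deriv_bound (hr : 0 < r) (u : ℝ) :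
    |u / r ^ 2 * gaussDensity r u| ≤ (Real.sqrt (2 * Real.pi * r ^ 2))⁻¹ / r := by
  have hrs := sqrt_pos_of hr
  have key := abs_mul_exp_le (u / r)
  have hexp : -(u / r) ^ 2 / 2 = -u ^ 2 / (2 * r ^ 2) := by
    rw [div_pow]; ring
  rw [hexp] at key
  unfold gaussDensity
  rw [abs_mul, abs_mul, abs_of_nonneg (le_of_lt (by positivity : (0:ℝ) < (Real.sqrt (2 * Real.pi * r ^ 2))⁻¹)), abs_of_nonneg (Real.exp_pos _).le]
  have habs : |u / r ^ 2| = |u / r| / r := by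
    rw [abs_div, abs_div, abs_of_pos hr, abs_of_pos (by positivity : (0:ℝ) < r ^ 2)]
    rw [div_div]
    congr 1
    ring
  rw [habs]
  have h5 : |u / r| / r * ((Real.sqrt (2 * Real.pi * r ^ 2))⁻¹ * Real.exp (-u ^ 2 / (2 * r ^ 2)))
      = (Real.sqrt (2 * Real.pi * r ^ 2))⁻¹ / r * (|u / r| * Real.exp (-u ^ 2 / (2 * r ^ 2))) := by
    ring
  rw [h5]
  calc (Real.sqrt (2 * Real.pi * r ^ 2))⁻¹ / r * (|u / r| * Real.exp (-u ^ 2 / (2 * r ^ 2)))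
      ≤ (Real.sqrt (2 * Real.pi * r ^ 2))⁻¹ / r * 1 := by
        apply mul_le_mul_of_nonneg_left key (by positivity)
    _ = (Real.sqrt (2 * Real.pi * r ^ 2))⁻¹ / r := mul_one _

lemma gauss_hasDerivAt (hr : 0 < r) (u : ℝ) :
    HasDerivAt (gaussDensity r) (-(u / r ^ 2) * gaussDensity r u) u := by
  have hr2 : (2 * r ^ 2 : ℝ) ≠ 0 := by positivity
  have h1 : HasDerivAt (fun u : ℝ => -u ^ 2 / (2 * r ^ 2)) (-(2 * u) / (2 * r ^ 2)) u := by
    have := ((hasDerivAt_pow 2 u).neg).div_const (2 * r ^ 2)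
    simpa using this
  have h2 := (h1.exp).const_mul ((Real.sqrt (2 * Real.pi * r ^ 2))⁻¹)
  refine h2.congr_deriv ?_
  unfold gaussDensity
  field_simp

lemma gauss_integrable (hr : 0 < r) : Integrable (gaussDensity r) := by
  have hb : (0:ℝ) < 1 / (2 * r ^ 2) := by positivity
  have h := (integrable_exp_neg_mul_sq hb).const_mul ((Real.sqrt (2 * Real.pi * r ^ 2))⁻¹)
  apply h.congr
  filter_upwards with u
  unfold gaussDensity
  congr 1
  congr 1
  field_simp

lemma gauss_integral (hr : 0 < r) : ∫ u, gaussDensity r u = 1 := by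
  have hb : (0:ℝ) < 1 / (2 * r ^ 2) := by positivity
  have h0 : ∀ u : ℝ, gaussDensity r u
      = (Real.sqrt (2 * Real.pi * r ^ 2))⁻¹ * Real.exp (-(1 / (2 * r ^ 2)) * u ^ 2) := by
    intro u
    unfold gaussDensity
    congr 2
    field_simp
  simp_rw [h0]
  rw [integral_const_mul, integral_gaussian]
  have h1 : Real.pi / (1 / (2 * r ^ 2)) = 2 * Real.pi * r ^ 2 := by
    field_simp
  rw [h1]
  exact inv_mul_cancel₀ (sqrt_pos_of hr).ne'

lemma gauss_shift (hr : 0 < r) (a u : ℝ) :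
    Real.exp (-(a / r ^ 2) * u) * gaussDensity r u
      = Real.exp (a ^ 2 / (2 * r ^ 2)) * gaussDensity r (u + a) := by
  have hmul : ∀ A B : ℝ, Real.exp A * ((Real.sqrt (2 * Real.pi * r ^ 2))⁻¹ * Real.exp B)
      = (Real.sqrt (2 * Real.pi * r ^ 2))⁻¹ * Real.exp (A + B) := by
    intro A B
    rw [Real.exp_add]; ring
  unfold gaussDensity
  rw [hmul, hmul]
  congr 1
  have hr2 : (r:ℝ) ^ 2 ≠ 0 := by positivity
  field_simp
  ring

/-- Integrability of `y ↦ f y * g (x - y)` for integrable nonneg `f` and bounded measurable `g`. -/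
lemma integrable_mul_kernel (hf : Integrable f) (hf0 : ∀ x, 0 ≤ f x) {g : ℝ → ℝ}
    (hg : Measurable g) {M : ℝ} (hM : ∀ u, |g u| ≤ M) (x : ℝ) :
    Integrable (fun y => f y * g (x - y)) := by
  have hmeas : AEStronglyMeasurable (fun y => f y * g (x - y)) volume := by
    apply (hf.aestronglyMeasurable.aemeasurable.mul
      ((hg.comp (measurable_const.sub measurable_id)).aemeasurable)).aestronglyMeasurable
  apply Integrable.mono (hf.mul_const M) hmeas
  filter_upwards with y
  rw [norm_mul, Real.norm_eq_abs, Real.norm_eq_abs, Real.norm_eq_abs,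
    abs_of_nonneg (hf0 y), abs_mul, abs_of_nonneg (hf0 y)]
  have hM0 : 0 ≤ M := le_trans (abs_nonneg _) (hM 0)
  calc f y * |g (x - y)| ≤ f y * M := mul_le_mul_of_nonneg_left (hM _) (hf0 y)
    _ ≤ |f y * M| := le_abs_self _
    _ = f y * |M| := by rw [abs_mul, abs_of_nonneg (hf0 y), abs_of_nonneg hM0]

lemma smoothed_integrand_integrable (hr : 0 < r) (hf : IsDensity f) (x : ℝ) :
    Integrable (fun y => f y * gaussDensity r (x - y)) := by
  apply integrable_mul_kernel hf.2.1 hf.1 (gauss_continuous hr).measurable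
    (M := (Real.sqrt (2 * Real.pi * r ^ 2))⁻¹) (fun u => ?_) x
  rw [abs_of_pos (gauss_pos hr u)]
  exact gauss_le hr u

lemma smoothed_nonneg (hr : 0 < r) (hf : IsDensity f) (x : ℝ) : 0 ≤ smoothed f r x := by
  apply integral_nonneg
  intro y
  exact mul_nonneg (hf.1 y) (gauss_pos hr _).le

/-- The derivative-integrand kernel `u ↦ -(u/r²)·w_r(u)` is continuous and bounded. -/
lemma dker_continuous (hr : 0 < r) : Continuous (fun u : ℝ => -(u / r ^ 2) * gaussDensity r u) :=
  (continuous_id.div_const _).neg.mul (gauss_continuous hr)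

lemma dker_bound (hr : 0 < r) (u : ℝ) :
    |(-(u / r ^ 2)) * gaussDensity r u| ≤ (Real.sqrt (2 * Real.pi * r ^ 2))⁻¹ / r := by
  rw [neg_mul, abs_neg]
  exact gauss_deriv_bound hr u

lemma deriv_integrand_integrable (hr : 0 < r) (hf : IsDensity f) (x : ℝ) :
    Integrable (fun y => f y * (-((x - y) / r ^ 2) * gaussDensity r (x - y))) := by
  exact integrable_mul_kernel hf.2.1 hf.1 (dker_continuous hr).measurable
    (fun u => dker_bound hr u) x

/-- Differentiation under the integral sign for the smoothed density. -/
lemma smoothed_hasDerivAt (hr : 0 < r) (hf : IsDensity f) (x : ℝ) :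
    HasDerivAt (smoothed f r)
      (∫ y, f y * (-((x - y) / r ^ 2) * gaussDensity r (x - y))) x := by
  have key := hasDerivAt_integral_of_dominated_loc_of_deriv_le
    (F := fun x' y => f y * gaussDensity r (x' - y))
    (F' := fun x' y => f y * (-((x' - y) / r ^ 2) * gaussDensity r (x' - y)))
    (x₀ := x) (bound := fun y => f y * ((Real.sqrt (2 * Real.pi * r ^ 2))⁻¹ / r))
    (s := Metric.ball x 1) (Metric.ball_mem_nhds x one_pos)
    (Filter.Eventually.of_forall fun x' =>
      (smoothed_integrand_integrable hr hf x').aestronglyMeasurable)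
    (smoothed_integrand_integrable hr hf x)
    (deriv_integrand_integrable hr hf x).aestronglyMeasurable
    ?_ (hf.2.1.mul_const _) ?_
  · exact key.2
  · filter_upwards with y
    intro x' _
    rw [Real.norm_eq_abs, abs_mul, abs_of_nonneg (hf.1 y)]
    exact mul_le_mul_of_nonneg_left (dker_bound hr _) (hf.1 y)
  · filter_upwards with y
    intro x' _
    have h1 : HasDerivAt (fun x' : ℝ => gaussDensity r (x' - y))
        (-((x' - y) / r ^ 2) * gaussDensity r (x' - y)) x' := by
      have := (gauss_hasDerivAt hr (x' - y)).comp x' ((hasDerivAt_id x').sub_const y)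
      simpa [Function.comp_def] using this
    exact h1.const_mul (f y)

lemma smoothed_deriv (hr : 0 < r) (hf : IsDensity f) (x : ℝ) :
    deriv (smoothed f r) x = ∫ y, f y * (-((x - y) / r ^ 2) * gaussDensity r (x - y)) :=
  (smoothed_hasDerivAt hr hf x).deriv

/-- The tilted smoothed density `G_a(x) = ∫ f(y) e^{-(a/r²)(x-y)} w_r(x-y) dy`. -/
noncomputable def Gfun (f : ℝ → ℝ) (r a x : ℝ) : ℝ :=
  ∫ y, f y * (Real.exp (-(a / r ^ 2) * (x - y)) * gaussDensity r (x - y))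

lemma tilted_kernel_eq (hr : 0 < r) (a : ℝ) :
    (fun u => Real.exp (-(a / r ^ 2) * u) * gaussDensity r u)
      = fun u => Real.exp (a ^ 2 / (2 * r ^ 2)) * gaussDensity r (u + a) := by
  funext u
  exact gauss_shift hr a u

lemma tilted_kernel_integrable (hr : 0 < r) (a : ℝ) :
    Integrable (fun u => Real.exp (-(a / r ^ 2) * u) * gaussDensity r u) := by
  rw [tilted_kernel_eq hr a]
  exact ((gauss_integrable hr).comp_add_right a).const_mul _

lemma tilted_kernel_integral (hr : 0 < r) (a : ℝ) :
    ∫ u, Real.exp (-(a / r ^ 2) * u) * gaussDensity r u = Real.exp (a ^ 2 / (2 * r ^ 2)) := by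
  rw [tilted_kernel_eq hr a]
  rw [integral_const_mul, integral_add_right_eq_self, gauss_integral hr, mul_one]

lemma tilted_kernel_bound (hr : 0 < r) (a u : ℝ) :
    |Real.exp (-(a / r ^ 2) * u) * gaussDensity r u|
      ≤ Real.exp (a ^ 2 / (2 * r ^ 2)) * (Real.sqrt (2 * Real.pi * r ^ 2))⁻¹ := by
  rw [gauss_shift hr a u, abs_mul, abs_of_pos (Real.exp_pos _),
    abs_of_pos (gauss_pos hr _)]
  exact mul_le_mul_of_nonneg_left (gauss_le hr _) (Real.exp_pos _).le

lemma Gfun_integrand_integrable (hr : 0 < r) (hf : IsDensity f) (a x : ℝ) :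
    Integrable (fun y => f y * (Real.exp (-(a / r ^ 2) * (x - y)) * gaussDensity r (x - y))) := by
  have hcont : Continuous (fun u => Real.exp (-(a / r ^ 2) * u) * gaussDensity r u) := by
    exact (Real.continuous_exp.comp (continuous_const.mul continuous_id)).mul (gauss_continuous hr)
  exact integrable_mul_kernel hf.2.1 hf.1 hcont.measurable
    (fun u => tilted_kernel_bound hr a u) x

lemma Gfun_nonneg (hr : 0 < r) (hf : IsDensity f) (a x : ℝ) : 0 ≤ Gfun f r a x := by
  apply integral_nonneg
  intro y
  exact mul_nonneg (hf.1 y) (mul_nonneg (Real.exp_pos _).le (gauss_pos hr _).le)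

lemma Gfun_integrable (hr : 0 < r) (hf : IsDensity f) (a : ℝ) :
    Integrable (Gfun f r a) := by
  have h := hf.2.1.integrable_convolution (ContinuousLinearMap.mul ℝ ℝ)
    (tilted_kernel_integrable hr a)
  apply h.congr
  filter_upwards with x
  rw [convolution_def]
  rfl

lemma Gfun_integral (hr : 0 < r) (hf : IsDensity f) (a : ℝ) :
    ∫ x, Gfun f r a x = Real.exp (a ^ 2 / (2 * r ^ 2)) := by
  have h := integral_convolution (ContinuousLinearMap.mul ℝ ℝ) hf.2.1
    (tilted_kernel_integrable hr a)
  have heq : ∫ x, Gfun f r a x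
      = ∫ x, convolution f (fun u =>
          Real.exp (-(a / r ^ 2) * u) * gaussDensity r u) (ContinuousLinearMap.mul ℝ ℝ) volume x := by
    apply integral_congr_ae
    filter_upwards with x
    rw [convolution_def]
    rfl
  rw [heq, h, hf.2.2, tilted_kernel_integral hr a]
  simp

/-- Tangent-line (Jensen) inequality for the tilted density. -/
lemma key_jensen (hr : 0 < r) (hf : IsDensity f) (x : ℝ) (hx : smoothed f r x ≠ 0) (a : ℝ) :
    Real.exp (a * score f r x) * smoothed f r x ≤ Gfun f r a x := by
  set m := score f r x with hm
  have hD : deriv (smoothed f r) x = m * smoothed f r x := by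
    rw [hm]
    unfold score
    field_simp
  -- lower-bound integrand pointwise
  have hpoint : ∀ y : ℝ,
      Real.exp (a * m) * ((1 - a * m) * (f y * gaussDensity r (x - y))
          + a * (f y * (-((x - y) / r ^ 2) * gaussDensity r (x - y))))
        ≤ f y * (Real.exp (-(a / r ^ 2) * (x - y)) * gaussDensity r (x - y)) := by
    intro y
    have hq : Real.exp (a * m) * (1 + (-(a / r ^ 2) * (x - y) - a * m))
        ≤ Real.exp (-(a / r ^ 2) * (x - y)) := by
      have := Real.add_one_le_exp (-(a / r ^ 2) * (x - y) - a * m)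
      have h2 := mul_le_mul_of_nonneg_left this (Real.exp_pos (a * m)).le
      rw [← Real.exp_add] at h2
      have h3 : a * m + (-(a / r ^ 2) * (x - y) - a * m) = -(a / r ^ 2) * (x - y) := by ring
      rw [h3] at h2
      calc Real.exp (a * m) * (1 + (-(a / r ^ 2) * (x - y) - a * m))
          = Real.exp (a * m) * (-(a / r ^ 2) * (x - y) - a * m + 1) := by ring
        _ ≤ Real.exp (-(a / r ^ 2) * (x - y)) := h2
    have hfw : 0 ≤ f y * gaussDensity r (x - y) :=
      mul_nonneg (hf.1 y) (gauss_pos hr _).le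
    have h4 := mul_le_mul_of_nonneg_right hq hfw
    calc Real.exp (a * m) * ((1 - a * m) * (f y * gaussDensity r (x - y))
          + a * (f y * (-((x - y) / r ^ 2) * gaussDensity r (x - y))))
        = Real.exp (a * m) * (1 + (-(a / r ^ 2) * (x - y) - a * m))
            * (f y * gaussDensity r (x - y)) := by
          field_simp
          ring
      _ ≤ Real.exp (-(a / r ^ 2) * (x - y)) * (f y * gaussDensity r (x - y)) := h4
      _ = f y * (Real.exp (-(a / r ^ 2) * (x - y)) * gaussDensity r (x - y)) := by ring
  -- integrate the pointwise inequality
  have hint1 : Integrable (fun y =>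
      Real.exp (a * m) * ((1 - a * m) * (f y * gaussDensity r (x - y))
        + a * (f y * (-((x - y) / r ^ 2) * gaussDensity r (x - y))))) := by
    apply Integrable.const_mul
    exact ((smoothed_integrand_integrable hr hf x).const_mul _).add
      ((deriv_integrand_integrable hr hf x).const_mul _)
  have hint2 := Gfun_integrand_integrable hr hf a x
  have hle := integral_mono hint1 hint2 hpoint
  have hlhs : ∫ y, Real.exp (a * m) * ((1 - a * m) * (f y * gaussDensity r (x - y))
      + a * (f y * (-((x - y) / r ^ 2) * gaussDensity r (x - y))))
      = Real.exp (a * m) * smoothed f r x := by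
    rw [integral_const_mul, integral_add ((smoothed_integrand_integrable hr hf x).const_mul _)
      ((deriv_integrand_integrable hr hf x).const_mul _), integral_const_mul,
      integral_const_mul]
    have h5 : ∫ y, f y * (-((x - y) / r ^ 2) * gaussDensity r (x - y))
        = m * smoothed f r x := by
      rw [← smoothed_deriv hr hf x, hD]
    rw [h5]
    have h6 : ∫ y, f y * gaussDensity r (x - y) = smoothed f r x := rfl
    rw [h6]
    ring
  rw [hlhs] at hle
  exact hle

lemma smoothed_continuous (hr : 0 < r) (hf : IsDensity f) : Continuous (smoothed f r) := by
  have : Differentiable ℝ (smoothed f r) := fun x =>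
    (smoothed_hasDerivAt hr hf x).differentiableAt
  exact this.continuous

lemma score_measurable (hr : 0 < r) (hf : IsDensity f) : Measurable (score f r) := by
  unfold score
  exact (measurable_deriv _).div (smoothed_continuous hr hf).measurable

end ScoreSubg

open ScoreSubg in
/-- Score is `O(1/r)`-subgaussian: there is a universal constant `C > 0`
(in particular `C = 2√2` works) such that for every `δ ∈ (0,1)`, the probability under
`x ∼ f_r` that `|s_r(x)| > (C/r)·√(log(2/δ))` is at most `δ`. -/
theorem score_subgaussian :
    ∃ C : ℝ, 0 < C ∧ C = 2 * Real.sqrt 2 ∧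
      ∀ (fStar : ℝ → ℝ) (r : ℝ), 0 < r → IsDensity fStar →
        ∀ δ : ℝ, 0 < δ → δ < 1 →
          densMeasure (smoothed fStar r)
            {x | (C / r) * Real.sqrt (Real.log (2 / δ)) < |score fStar r x|}
            ≤ ENNReal.ofReal δ := by
  refine ⟨2 * Real.sqrt 2, by positivity, rfl, ?_⟩
  intro f r hr hf δ hδ0 hδ1
  set C : ℝ := 2 * Real.sqrt 2 with hC
  set L : ℝ := Real.log (2 / δ) with hL
  have hL_pos : 0 < L := by
    apply Real.log_pos
    rw [lt_div_iff₀ hδ0]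
    linarith
  set t : ℝ := C / r * Real.sqrt L with ht
  have ht_pos : 0 < t := by
    apply mul_pos (by positivity)
    exact Real.sqrt_pos.2 hL_pos
  set lam : ℝ := t * r ^ 2 with hlam
  have hlam_pos : 0 < lam := by positivity
  set A : Set ℝ := {x | t < |score f r x|} with hA
  have hA_meas : MeasurableSet A :=
    measurableSet_lt measurable_const (score_measurable hr hf).abs
  -- pointwise bound on A
  set H : ℝ → ℝ := fun x => Real.exp (-(lam * t)) * (Gfun f r lam x + Gfun f r (-lam) x) with hH
  have hptwise : ∀ x ∈ A, smoothed f r x ≤ H x := by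
    intro x hxA
    have hsm : smoothed f r x ≠ 0 := by
      intro h0
      have : score f r x = 0 := by unfold score; rw [h0, div_zero]
      rw [hA] at hxA
      simp only [Set.mem_setOf_eq, this, abs_zero] at hxA
      linarith
    have hsm_pos : 0 < smoothed f r x := lt_of_le_of_ne (smoothed_nonneg hr hf x) (Ne.symm hsm)
    rw [hA] at hxA
    simp only [Set.mem_setOf_eq] at hxA
    -- case split on the sign of the score
    rcases lt_abs.mp hxA with hpos | hneg
    · -- score > t, use a = lam
      have hkey := key_jensen hr hf x hsm lam
      have h1 : Real.exp (lam * t) ≤ Real.exp (lam * score f r x) := by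
        apply Real.exp_le_exp.2
        exact mul_le_mul_of_nonneg_left hpos.le hlam_pos.le
      have h2 : Real.exp (lam * t) * smoothed f r x ≤ Gfun f r lam x :=
        le_trans (mul_le_mul_of_nonneg_right h1 hsm_pos.le) hkey
      have h3 : smoothed f r x ≤ Real.exp (-(lam * t)) * Gfun f r lam x := by
        rw [Real.exp_neg]
        have h4 := mul_le_mul_of_nonneg_left h2 (inv_nonneg.2 (Real.exp_pos (lam * t)).le)
        rwa [← mul_assoc, inv_mul_cancel₀ (Real.exp_pos (lam * t)).ne', one_mul] at h4
      calc smoothed f r x ≤ Real.exp (-(lam * t)) * Gfun f r lam x := h3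
        _ ≤ H x := by
            have hG := Gfun_nonneg hr hf (-lam) x
            have he := (Real.exp_pos (-(lam * t))).le
            show Real.exp (-(lam * t)) * Gfun f r lam x
              ≤ Real.exp (-(lam * t)) * (Gfun f r lam x + Gfun f r (-lam) x)
            nlinarith
    · -- score < -t, use a = -lam
      have hneg' : score f r x < -t := by linarith
      have hkey := key_jensen hr hf x hsm (-lam)
      have h1 : Real.exp (lam * t) ≤ Real.exp (-lam * score f r x) := by
        apply Real.exp_le_exp.2
        nlinarith
      have h2 : Real.exp (lam * t) * smoothed f r x ≤ Gfun f r (-lam) x :=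
        le_trans (mul_le_mul_of_nonneg_right h1 hsm_pos.le) hkey
      have h3 : smoothed f r x ≤ Real.exp (-(lam * t)) * Gfun f r (-lam) x := by
        rw [Real.exp_neg]
        have h4 := mul_le_mul_of_nonneg_left h2 (inv_nonneg.2 (Real.exp_pos (lam * t)).le)
        rwa [← mul_assoc, inv_mul_cancel₀ (Real.exp_pos (lam * t)).ne', one_mul] at h4
      calc smoothed f r x ≤ Real.exp (-(lam * t)) * Gfun f r (-lam) x := h3
        _ ≤ H x := by
            have hG := Gfun_nonneg hr hf lam x
            have he := (Real.exp_pos (-(lam * t))).le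
            show Real.exp (-(lam * t)) * Gfun f r (-lam) x
              ≤ Real.exp (-(lam * t)) * (Gfun f r lam x + Gfun f r (-lam) x)
            nlinarith
  -- H is integrable and nonneg with known integral
  have hH_int : Integrable H :=
    (((Gfun_integrable hr hf lam).add (Gfun_integrable hr hf (-lam))).const_mul _)
  have hH_nonneg : ∀ x, 0 ≤ H x := by
    intro x
    exact mul_nonneg (Real.exp_pos _).le
      (add_nonneg (Gfun_nonneg hr hf lam x) (Gfun_nonneg hr hf (-lam) x))
  have hH_integral : ∫ x, H x = 2 * Real.exp (lam ^ 2 / (2 * r ^ 2) - lam * t) := by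
    rw [hH]
    rw [integral_const_mul, integral_add (Gfun_integrable hr hf lam)
      (Gfun_integrable hr hf (-lam)), Gfun_integral hr hf lam, Gfun_integral hr hf (-lam)]
    rw [show ((-lam) ^ 2 : ℝ) = lam ^ 2 by ring, Real.exp_sub, Real.exp_neg]
    ring
  -- the numeric bound
  have hnum : 2 * Real.exp (lam ^ 2 / (2 * r ^ 2) - lam * t) ≤ δ := by
    have hexp_eq : lam ^ 2 / (2 * r ^ 2) - lam * t = -(4 * L) := by
      have hs2 : Real.sqrt 2 ^ 2 = 2 := Real.sq_sqrt (by norm_num)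
      have hsL : Real.sqrt L ^ 2 = L := Real.sq_sqrt hL_pos.le
      have hC2 : C ^ 2 = 8 := by rw [hC, mul_pow, hs2]; norm_num
      have hr2 : (r : ℝ) ^ 2 ≠ 0 := by positivity
      have ht2 : t ^ 2 = 8 * L / r ^ 2 := by
        rw [ht, mul_pow, div_pow, hC2, hsL]
        ring
      have h1 : lam ^ 2 / (2 * r ^ 2) - lam * t = -(t ^ 2 * r ^ 2) / 2 := by
        rw [hlam]
        field_simp
        ring
      rw [h1, ht2]
      field_simp
      ring
    rw [hexp_eq]
    have hexpL : Real.exp L = 2 / δ := Real.exp_log (by positivity)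
    have h4 : Real.exp (-(4 * L)) = (δ / 2) ^ 4 := by
      have h5 : Real.exp (-L) = δ / 2 := by
        rw [Real.exp_neg, hexpL]
        field_simp
      have h6 : (-(4 * L)) = (4 : ℕ) * (-L) := by push_cast; ring
      rw [h6, Real.exp_nat_mul, h5]
    rw [h4]
    have hδ4 : δ ^ 4 ≤ δ := by
      calc δ ^ 4 ≤ δ ^ 1 := pow_le_pow_of_le_one hδ0.le hδ1.le (by norm_num)
        _ = δ := pow_one δ
    rw [div_pow]
    norm_num
    linarith
  -- put everything together
  have hμ : densMeasure (smoothed f r) A = ∫⁻ x in A, ENNReal.ofReal (smoothed f r x) := by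
    unfold densMeasure
    rw [withDensity_apply _ hA_meas]
  rw [hμ]
  have hstep1 : ∫⁻ x in A, ENNReal.ofReal (smoothed f r x)
      ≤ ∫⁻ x in A, ENNReal.ofReal (H x) := by
    apply lintegral_mono_ae
    rw [ae_restrict_iff' hA_meas]
    filter_upwards with x hx
    exact ENNReal.ofReal_le_ofReal (hptwise x hx)
  have hstep2 : ∫⁻ x in A, ENNReal.ofReal (H x) ≤ ∫⁻ x, ENNReal.ofReal (H x) :=
    setLIntegral_le_lintegral A _
  have hstep3 : ∫⁻ x, ENNReal.ofReal (H x) = ENNReal.ofReal (∫ x, H x) := by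
    rw [← ofReal_integral_eq_lintegral_ofReal hH_int
      (Filter.Eventually.of_forall hH_nonneg)]
  calc ∫⁻ x in A, ENNReal.ofReal (smoothed f r x)
      ≤ ∫⁻ x in A, ENNReal.ofReal (H x) := hstep1
    _ ≤ ∫⁻ x, ENNReal.ofReal (H x) := hstep2
    _ = ENNReal.ofReal (∫ x, H x) := hstep3
    _ ≤ ENNReal.ofReal δ := by
        apply ENNReal.ofReal_le_ofReal
        rw [hH_integral]
        exact hnum
end
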